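/- For the traditional power logit family H(x,r) = G(x)^r with G the standard logistic c.d.f., as r → ∞ the Arnold–Groeneveld skewness γ(r) = 1 - 2·(r/(r+1))^r converges to 1 - 2/e ≈ 0.264; in particular the skewness of H(·,r) is bounded above by 1 - 2/e for all r > 0. -/

import Mathlib

open Real Set Filter Topology

lemma aux_key (r : ℝ) (hr : 0 < r) : Real.exp (-1) ≤ (r / (r + 1)) ^ r := by
  have hr1 : 0 < r + 1 := by linarith
  have hb : 0 < r / (r + 1) := div_pos hr hr1
  rw [Real.rpow_def_of_pos hb]
  apply Real.exp_le_exp.2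
  have hlog : Real.log ((r + 1) / r) ≤ 1 / r := by
    have := Real.log_le_sub_one_of_pos (show (0:ℝ) < (r + 1) / r from div_pos hr1 hr)
    have : (r + 1) / r - 1 = 1 / r := by field_simp; ring
    linarith [Real.log_le_sub_one_of_pos (show (0:ℝ) < (r + 1) / r from div_pos hr1 hr)]
  have hlog2 : Real.log (r / (r + 1)) = -Real.log ((r + 1) / r) := by
    rw [← Real.log_inv]; congr 1; field_simp
  rw [hlog2]
  have hone : Real.log ((r + 1) / r) * r ≤ 1 := by
    have h1r : (1 / r) * r = 1 := by field_simp
    nlinarith [mul_le_mul_of_nonneg_right hlog (le_of_lt hr)]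
  nlinarith [hone]

theorem stmt_8 :
    Tendsto (fun r : ℝ => 1 - 2 * (r / (r + 1)) ^ r) atTop
        (nhds (1 - 2 / Real.exp 1)) ∧
      ∀ r : ℝ, 0 < r → 1 - 2 * (r / (r + 1)) ^ r ≤ 1 - 2 / Real.exp 1 := by
  constructor
  · have h1 : Tendsto (fun x : ℝ => (1 + 1 / x) ^ x) atTop (nhds (Real.exp 1)) := by
      simpa using tendsto_one_add_div_rpow_exp 1
    have h2 : Tendsto (fun x : ℝ => ((1 + 1 / x) ^ x)⁻¹) atTop (nhds (Real.exp 1)⁻¹) :=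
      h1.inv₀ (Real.exp_ne_zero 1)
    have heq : ∀ᶠ x : ℝ in atTop, ((1 + 1 / x) ^ x)⁻¹ = (x / (x + 1)) ^ x := by
      filter_upwards [eventually_gt_atTop 0] with x hx
      have h1x : (0:ℝ) ≤ 1 + 1 / x := by positivity
      rw [← Real.inv_rpow h1x]
      congr 1
      field_simp
    have h3 : Tendsto (fun x : ℝ => (x / (x + 1)) ^ x) atTop (nhds (Real.exp 1)⁻¹) :=
      h2.congr' heq
    have := (tendsto_const_nhds (x := (1:ℝ)) (f := atTop)).sub
      ((tendsto_const_nhds (x := (2:ℝ)) (f := atTop)).mul h3)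
    simpa [div_eq_mul_inv] using this
  · intro r hr
    have := aux_key r hr
    have : 2 / Real.exp 1 ≤ 2 * (r / (r + 1)) ^ r := by
      rw [div_eq_mul_inv, ← Real.exp_neg]
      nlinarith
    linarith
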